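/- Let N, a, m, k' be positive integers, ε' ≥ 0, let Ext: {0,1}^N → {0,1}^a be a (k',ε') oblivious bit-fixing extractor, and let f: ({0,1}^a)^m → {0,1}. Let ρ ∈ {0,1,⋆}^{mN} be a restriction (on m blocks of N coordinates each) leaving at least k' coordinates free within each of the m blocks. Define (f∘Ext^m)|_ρ: ({0,1}^N)^m → {0,1} by (f∘Ext^m)|_ρ(X_1,…,X_m) = f(Ext(Y_1),…,Ext(Y_m)), where Y_i ∈ {0,1}^N agrees with ρ on the fixed coordinates of block i and with X_i on the free coordinates. Then R_m((f∘Ext^m)|_ρ) ≤ R_m(f) + 4·m·ε', where on the left R_m is the m-party norm with respect to blocks {0,1}^N and on the right it is the m-party norm of f with respect to blocks {0,1}^a. -/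
import Mathlib


/-- `(-1)^v` for a bit `v : ZMod 2`. -/
noncomputable def pm1 (v : ZMod 2) : ℝ := if v = 1 then -1 else 1

/-- Two distributions are `ε`-close: all events get probabilities within `ε`. -/
def CloseTo {α : Type*} [Fintype α] (p q : α → ℝ) (ε : ℝ) : Prop :=
  ∀ S : Finset α, |∑ x ∈ S, p x - ∑ x ∈ S, q x| ≤ ε

/-- Pushforward of a distribution along a map. -/
noncomputable def push {α β : Type*} [Fintype α] [DecidableEq β] (h : α → β) (p : α → ℝ) :
    β → ℝ :=
  fun y => ∑ x : α, if h x = y then p x else 0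

/-- The uniform distribution on a finite type. -/
noncomputable def unif (α : Type*) [Fintype α] : α → ℝ := fun _ => (Fintype.card α : ℝ)⁻¹

/-- Fill the free (`none`) coordinates of a restriction `σ` using `x`. -/
def fill {N : ℕ} (σ : Fin N → Option (ZMod 2)) (x : Fin N → ZMod 2) : Fin N → ZMod 2 :=
  fun j => (σ j).getD (x j)

/-- `Ext` is a `(k', ε')` oblivious bit-fixing source extractor. -/
def OBFExtractor {N a : ℕ} (Ext : (Fin N → ZMod 2) → (Fin a → ZMod 2))
    (k' : ℕ) (ε' : ℝ) : Prop :=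
  ∀ σ : Fin N → Option (ZMod 2),
    k' ≤ (Finset.univ.filter (fun j => σ j = none)).card →
    CloseTo (push (fun x => Ext (fill σ x)) (unif (Fin N → ZMod 2)))
      (unif (Fin a → ZMod 2)) ε'

/-- The `m`-party norm of `g : ({0,1}^b)^m → {0,1}`. -/
noncomputable def partyNorm (m b : ℕ) (g : (Fin m → (Fin b → ZMod 2)) → ZMod 2) : ℝ :=
  (∑ X0 : Fin m → Fin b → ZMod 2, ∑ X1 : Fin m → Fin b → ZMod 2,
      pm1 (∑ δ : Fin m → Bool, g (fun i => if δ i then X1 i else X0 i))) /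
    ((Fintype.card (Fin m → Fin b → ZMod 2) : ℝ)) ^ 2

/- ===== auxiliary lemmas ===== -/

lemma pm1_abs (v : ZMod 2) : |pm1 v| ≤ 1 := by
  unfold pm1; split <;> norm_num

lemma unif_nonneg' (α : Type*) [Fintype α] (x : α) : 0 ≤ unif α x := by
  unfold unif; positivity

lemma unif_sum' (α : Type*) [Fintype α] [Nonempty α] : ∑ x : α, unif α x = 1 := by
  unfold unif
  rw [Finset.sum_const, Finset.card_univ, nsmul_eq_mul, mul_inv_cancel₀]
  exact_mod_cast Fintype.card_ne_zero

lemma push_nonneg' {α β : Type*} [Fintype α] [DecidableEq β] (h : α → β) (p : α → ℝ)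
    (hp : ∀ x, 0 ≤ p x) (y : β) : 0 ≤ push h p y := by
  unfold push
  exact Finset.sum_nonneg (fun x _ => by split <;> simp [hp x])

lemma push_sum_one' {α β : Type*} [Fintype α] [Fintype β] [DecidableEq β] (h : α → β)
    (p : α → ℝ) (hp : ∑ x, p x = 1) : ∑ y : β, push h p y = 1 := by
  unfold push
  rw [Finset.sum_comm, ← hp]
  apply Finset.sum_congr rfl
  intro x _
  rw [Finset.sum_ite_eq Finset.univ (h x) (fun _ => p x)]
  simp

lemma closeTo_sum_abs {α : Type*} [Fintype α] {p q : α → ℝ} {ε : ℝ} (h : CloseTo p q ε) :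
    ∑ x : α, |p x - q x| ≤ 2 * ε := by
  classical
  have h1 := h (Finset.univ.filter (fun x => q x ≤ p x))
  have h2 := h (Finset.univ.filter (fun x => ¬ q x ≤ p x))
  rw [← Finset.sum_filter_add_sum_filter_not Finset.univ (fun x => q x ≤ p x)]
  have e1 : ∑ x ∈ Finset.univ.filter (fun x => q x ≤ p x), |p x - q x|
      = ∑ x ∈ Finset.univ.filter (fun x => q x ≤ p x), p x
        - ∑ x ∈ Finset.univ.filter (fun x => q x ≤ p x), q x := by
    rw [← Finset.sum_sub_distrib]
    exact Finset.sum_congr rfl fun x hx =>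
      abs_of_nonneg (sub_nonneg.2 (Finset.mem_filter.mp hx).2)
  have e2 : ∑ x ∈ Finset.univ.filter (fun x => ¬ q x ≤ p x), |p x - q x|
      = -(∑ x ∈ Finset.univ.filter (fun x => ¬ q x ≤ p x), p x
        - ∑ x ∈ Finset.univ.filter (fun x => ¬ q x ≤ p x), q x) := by
    rw [← Finset.sum_sub_distrib, ← Finset.sum_neg_distrib]
    apply Finset.sum_congr rfl
    intro x hx
    have := (Finset.mem_filter.mp hx).2
    rw [abs_of_neg (by linarith)]
  rw [e1, e2]
  rw [abs_le] at h1 h2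
  linarith [h1.1, h1.2, h2.1, h2.2]

lemma prod_sum_swap (ι α : Type*) [Fintype ι] [DecidableEq ι] [Fintype α] (g : ι → α → ℝ) :
    ∑ Z : ι → α, ∏ c, g c (Z c) = ∏ c, ∑ x, g c x := by
  rw [Finset.prod_univ_sum]
  exact (Finset.sum_congr (by simp [Fintype.piFinset_univ]) (fun _ _ => rfl))

lemma hybrid {ι α : Type*} [Fintype ι] [DecidableEq ι] [Fintype α]
    (p q : ι → α → ℝ) (ε : ℝ)
    (hp0 : ∀ c x, 0 ≤ p c x) (hp1 : ∀ c, ∑ x, p c x = 1)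
    (hq0 : ∀ c x, 0 ≤ q c x) (hq1 : ∀ c, ∑ x, q c x = 1)
    (hcl : ∀ c, ∑ x, |p c x - q c x| ≤ 2 * ε)
    (F : (ι → α) → ℝ) (hF : ∀ Z, |F Z| ≤ 1) :
    |∑ Z : ι → α, (∏ c, p c (Z c)) * F Z - ∑ Z : ι → α, (∏ c, q c (Z c)) * F Z|
      ≤ 2 * (Fintype.card ι) * ε := by
  classical
  set G : Finset ι → ℝ := fun t =>
    ∑ Z : ι → α, (∏ c, (if c ∈ t then q c (Z c) else p c (Z c))) * F Z with hG
  have key : ∀ t : Finset ι, |G ∅ - G t| ≤ 2 * t.card * ε := by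
    intro t
    induction t using Finset.induction_on with
    | empty => simp
    | @insert c t hc ih =>
      have step : |G t - G (insert c t)| ≤ 2 * ε := by
        have hdiff : G t - G (insert c t)
            = ∑ Z : ι → α, ((p c (Z c) - q c (Z c)) *
                (∏ j ∈ Finset.univ.erase c, (if j ∈ t then q j (Z j) else p j (Z j)))) * F Z := by
          rw [hG]
          simp only [← Finset.sum_sub_distrib]
          apply Finset.sum_congr rfl
          intro Z _
          rw [← Finset.mul_prod_erase Finset.univ _ (Finset.mem_univ c),
              ← Finset.mul_prod_erase Finset.univ
                (fun j => (if j ∈ insert c t then q j (Z j) else p j (Z j))) (Finset.mem_univ c)]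
          have hpe : (∏ j ∈ Finset.univ.erase c, (if j ∈ insert c t then q j (Z j) else p j (Z j)))
              = ∏ j ∈ Finset.univ.erase c, (if j ∈ t then q j (Z j) else p j (Z j)) := by
            apply Finset.prod_congr rfl
            intro j hj
            have : j ≠ c := (Finset.mem_erase.mp hj).1
            simp [Finset.mem_insert, this]
          rw [hpe, if_neg hc, if_pos (Finset.mem_insert_self c t)]
          ring
        rw [hdiff]
        have hb : |∑ Z : ι → α, ((p c (Z c) - q c (Z c)) *
                (∏ j ∈ Finset.univ.erase c, (if j ∈ t then q j (Z j) else p j (Z j)))) * F Z|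
            ≤ ∑ Z : ι → α, ∏ j, (fun j x => if j = c then |p c x - q c x| else
                (if j ∈ t then q j x else p j x)) j (Z j) := by
          refine (Finset.abs_sum_le_sum_abs _ _).trans (Finset.sum_le_sum ?_)
          intro Z _
          rw [abs_mul, abs_mul]
          have hprodnn : 0 ≤ ∏ j ∈ Finset.univ.erase c, (if j ∈ t then q j (Z j) else p j (Z j)) :=
            Finset.prod_nonneg (fun j _ => by split <;> [exact hq0 _ _; exact hp0 _ _])
          have h1 : |p c (Z c) - q c (Z c)| *
                |∏ j ∈ Finset.univ.erase c, (if j ∈ t then q j (Z j) else p j (Z j))| * |F Z|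
              ≤ |p c (Z c) - q c (Z c)| *
                (∏ j ∈ Finset.univ.erase c, (if j ∈ t then q j (Z j) else p j (Z j))) := by
            rw [abs_of_nonneg hprodnn]
            exact mul_le_of_le_one_right (mul_nonneg (abs_nonneg _) hprodnn) (hF Z)
          refine h1.trans (le_of_eq ?_)
          rw [← Finset.mul_prod_erase Finset.univ
            (fun j => (if j = c then |p c (Z j) - q c (Z j)| else (if j ∈ t then q j (Z j) else p j (Z j)))) (Finset.mem_univ c)]
          simp only [if_pos rfl]
          congr 1
          apply Finset.prod_congr rfl
          intro j hj
          simp [(Finset.mem_erase.mp hj).1]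
        refine hb.trans ?_
        rw [prod_sum_swap ι α (fun j x => if j = c then |p c x - q c x| else if j ∈ t then q j x else p j x)]
        rw [← Finset.mul_prod_erase Finset.univ
          (fun j => ∑ x, (if j = c then |p c x - q c x| else (if j ∈ t then q j x else p j x))) (Finset.mem_univ c)]
        simp only [if_pos rfl]
        have h2 : (∏ j ∈ Finset.univ.erase c, ∑ x, (if j = c then |p c x - q c x| else (if j ∈ t then q j x else p j x))) = 1 := by
          apply Finset.prod_eq_one
          intro j hj
          have hjc : j ≠ c := (Finset.mem_erase.mp hj).1
          simp only [if_neg hjc]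
          split <;> [exact hq1 j; exact hp1 j]
        rw [h2, mul_one]
        exact hcl c
      calc |G ∅ - G (insert c t)| ≤ |G ∅ - G t| + |G t - G (insert c t)| := abs_sub_le _ _ _
        _ ≤ 2 * t.card * ε + 2 * ε := add_le_add ih step
        _ ≤ 2 * (insert c t).card * ε := by
            rw [Finset.card_insert_of_notMem hc]
            push_cast
            ring_nf
            linarith
  have h0 : G ∅ = ∑ Z : ι → α, (∏ c, p c (Z c)) * F Z := by simp [hG]
  have h1 : G Finset.univ = ∑ Z : ι → α, (∏ c, q c (Z c)) * F Z := by simp [hG]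
  have := key Finset.univ
  rw [h0, h1, Finset.card_univ] at this
  exact this

def pairEquiv (m : ℕ) (β : Type*) : (Fin m × Bool → β) ≃ (Fin m → β) × (Fin m → β) where
  toFun W := (fun i => W (i, false), fun i => W (i, true))
  invFun P := fun c => if c.2 then P.2 c.1 else P.1 c.1
  left_inv W := by funext c; rcases c with ⟨i, b⟩; cases b <;> simp
  right_inv P := by simp

lemma partyNorm_eq (m b : ℕ) (g : (Fin m → (Fin b → ZMod 2)) → ZMod 2) :
    partyNorm m b g = ∑ W : (Fin m × Bool) → (Fin b → ZMod 2),
      (∏ c : Fin m × Bool, unif (Fin b → ZMod 2) (W c)) *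
        pm1 (∑ δ : Fin m → Bool, g (fun i => W (i, δ i))) := by
  classical
  have hprod : ∀ W : (Fin m × Bool) → (Fin b → ZMod 2),
      (∏ c : Fin m × Bool, unif (Fin b → ZMod 2) (W c))
      = (((Fintype.card (Fin m → Fin b → ZMod 2) : ℝ)) ^ 2)⁻¹ := by
    intro W
    simp only [unif]
    rw [Finset.prod_const, Finset.card_univ]
    congr 1
    have h1 : Fintype.card (Fin m → Fin b → ZMod 2) = Fintype.card (Fin b → ZMod 2) ^ m := by
      rw [Fintype.card_fun, Fintype.card_fin]
    have h2 : Fintype.card (Fin m × Bool) = m * 2 := by simp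
    rw [h1, h2]
    push_cast
    rw [inv_pow, ← pow_mul]
  have hsum : (∑ W : (Fin m × Bool) → (Fin b → ZMod 2),
        pm1 (∑ δ : Fin m → Bool, g (fun i => W (i, δ i))))
      = ∑ X0 : Fin m → Fin b → ZMod 2, ∑ X1 : Fin m → Fin b → ZMod 2,
          pm1 (∑ δ : Fin m → Bool, g (fun i => if δ i then X1 i else X0 i)) := by
    rw [← Equiv.sum_comp (pairEquiv m (Fin b → ZMod 2)).symm
      (fun W => pm1 (∑ δ : Fin m → Bool, g (fun i => W (i, δ i))))]
    rw [Fintype.sum_prod_type]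
    rfl
  simp only [partyNorm, hprod, ← hsum]
  rw [div_eq_iff (by positivity), Finset.sum_mul]
  apply Finset.sum_congr rfl
  intro W _
  rw [mul_comm, ← mul_assoc, mul_inv_cancel₀ (by positivity), one_mul]

lemma push_change {β α ι : Type*} [Fintype β] [Fintype α] [DecidableEq α] [Fintype ι]
    [DecidableEq ι] (h : ι → β → α) (F : (ι → α) → ℝ) :
    ∑ W : ι → β, (∏ c, unif β (W c)) * F (fun c => h c (W c))
      = ∑ Z : ι → α, (∏ c, push (h c) (unif β) (Z c)) * F Z := by
  classical
  have key : ∀ Z : ι → α, (∏ c, push (h c) (unif β) (Z c))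
      = ∑ W : ι → β, (if (fun c => h c (W c)) = Z then ∏ c, unif β (W c) else 0) := by
    intro Z
    simp only [push]
    rw [← prod_sum_swap ι β (fun c w => if h c w = Z c then unif β w else 0)]
    apply Finset.sum_congr rfl
    intro W _
    have h1 : ∀ c, (if h c (W c) = Z c then unif β (W c) else 0)
        = (if h c (W c) = Z c then (1:ℝ) else 0) * unif β (W c) := by
      intro c; split <;> simp
    simp only [h1]
    rw [Finset.prod_mul_distrib, Finset.prod_boole]
    by_cases hc : (fun c => h c (W c)) = Z
    · have hall : ∀ i ∈ Finset.univ, h i (W i) = Z i := fun i _ => congrFun hc i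
      simp [hc, hall]
    · have hnall : ¬ ∀ i, h i (W i) = Z i := fun hall => hc (funext hall)
      simp [hc, hnall]
  simp only [key, Finset.sum_mul]
  rw [Finset.sum_comm]
  apply Finset.sum_congr rfl
  intro W _
  simp only [ite_mul, zero_mul]
  rw [Finset.sum_ite_eq Finset.univ (fun c => h c (W c)) (fun Z => (∏ c, unif β (W c)) * F Z)]
  simp


theorem stmt4
    (N a m k' : ℕ) (hN : 0 < N) (ha : 0 < a) (hm : 0 < m) (hk' : 0 < k')
    (ε' : ℝ) (hε' : 0 ≤ ε')
    (Ext : (Fin N → ZMod 2) → (Fin a → ZMod 2)) (hExt : OBFExtractor Ext k' ε')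
    (f : (Fin m → (Fin a → ZMod 2)) → ZMod 2)
    (ρ : Fin m → Fin N → Option (ZMod 2))
    (hρ : ∀ i, k' ≤ (Finset.univ.filter (fun j => ρ i j = none)).card) :
    partyNorm m N (fun X => f (fun i => Ext (fill (ρ i) (X i))))
      ≤ partyNorm m a f + 4 * m * ε' := by
  classical
  have hA : partyNorm m N (fun X => f (fun i => Ext (fill (ρ i) (X i))))
      = ∑ Z : (Fin m × Bool) → (Fin a → ZMod 2),
          (∏ c : Fin m × Bool,
            push (fun w => Ext (fill (ρ c.1) w)) (unif (Fin N → ZMod 2)) (Z c)) *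
          (fun Z : (Fin m × Bool) → (Fin a → ZMod 2) =>
            pm1 (∑ δ : Fin m → Bool, f (fun i => Z (i, δ i)))) Z := by
    rw [partyNorm_eq]
    rw [← push_change (fun (c : Fin m × Bool) (w : Fin N → ZMod 2) => Ext (fill (ρ c.1) w))
      (fun Z : (Fin m × Bool) → (Fin a → ZMod 2) =>
        pm1 (∑ δ : Fin m → Bool, f (fun i => Z (i, δ i))))]
  have hC : partyNorm m a f
      = ∑ Z : (Fin m × Bool) → (Fin a → ZMod 2),
          (∏ _c : Fin m × Bool, unif (Fin a → ZMod 2) (Z _c)) *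
          (fun Z : (Fin m × Bool) → (Fin a → ZMod 2) =>
            pm1 (∑ δ : Fin m → Bool, f (fun i => Z (i, δ i)))) Z := by
    rw [partyNorm_eq]
  have hyb := hybrid
    (fun (c : Fin m × Bool) => push (fun w => Ext (fill (ρ c.1) w)) (unif (Fin N → ZMod 2)))
    (fun (_ : Fin m × Bool) => unif (Fin a → ZMod 2)) ε'
    (fun c x => push_nonneg' _ _ (fun _ => unif_nonneg' _ _) x)
    (fun c => push_sum_one' _ _ (unif_sum' _))
    (fun c x => unif_nonneg' _ _)
    (fun c => unif_sum' _)
    (fun c => closeTo_sum_abs (hExt (ρ c.1) (hρ c.1)))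
    (fun Z : (Fin m × Bool) → (Fin a → ZMod 2) =>
      pm1 (∑ δ : Fin m → Bool, f (fun i => Z (i, δ i))))
    (fun Z => pm1_abs _)
  rw [← hA, ← hC] at hyb
  have hb : 2 * ((Fintype.card (Fin m × Bool)) : ℝ) * ε' = 4 * m * ε' := by
    rw [Fintype.card_prod, Fintype.card_fin, Fintype.card_bool]
    push_cast
    ring
  rw [hb] at hyb
  have := (abs_le.mp hyb).2
  linarith
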